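/- arXiv:2110.02415 — 4 statements merged into one kernel-verified Lean document; each statement's English description precedes it below -/
import Mathlib

section
/- For a set S of at least 3 points in ℝ^d, every angle determined by three distinct points of S is at most π/3 if and only if all pairwise distances between points of S are equal. -/
open EuclideanGeometry Real

theorem stmt3 (d : ℕ) (S : Finset (EuclideanSpace ℝ (Fin d))) (hS : 3 ≤ S.card) :
    (∀ a ∈ S, ∀ b ∈ S, ∀ c ∈ S, a ≠ b → b ≠ c → a ≠ c →
        EuclideanGeometry.angle a b c ≤ Real.pi / 3) ↔
      (∃ r : ℝ, ∀ x ∈ S, ∀ y ∈ S, x ≠ y → dist x y = r) := by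
  constructor
  · intro h
    -- all angles equal π/3, hence equilateral triangles
    have hang : ∀ a ∈ S, ∀ b ∈ S, ∀ c ∈ S, a ≠ b → b ≠ c → a ≠ c →
        EuclideanGeometry.angle a b c = Real.pi / 3 := by
      intro a ha b hb c hc hab hbc hac
      have h1 := h a ha b hb c hc hab hbc hac
      have h2 := h b hb c hc a ha hbc hac.symm hab.symm
      have h3 := h c hc a ha b hb hac.symm hab hbc.symm
      have hsum := EuclideanGeometry.angle_add_angle_add_angle_eq_pi (p₁ := b) (p₂ := a)
        c hab
      -- hsum : ∠ b a c + ∠ a c b + ∠ c b a = π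
      rw [EuclideanGeometry.angle_comm b a c, EuclideanGeometry.angle_comm a c b,
        EuclideanGeometry.angle_comm c b a] at hsum
      linarith
    -- common vertex lemma
    have E : ∀ x ∈ S, ∀ y ∈ S, ∀ z ∈ S, x ≠ y → x ≠ z → dist x y = dist x z := by
      intro x hx y hy z hz hxy hxz
      by_cases hyz : y = z
      · rw [hyz]
      · apply EuclideanGeometry.dist_eq_of_angle_eq_angle_of_angle_ne_pi
        · rw [hang x hx y hy z hz hxy hyz hxz, EuclideanGeometry.angle_comm,
            hang y hy z hz x hx hyz (Ne.symm hxz) (Ne.symm hxy)]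
        · rw [hang y hy x hx z hz (Ne.symm hxy) hxz hyz]
          have := Real.pi_pos
          intro hpi; linarith
    obtain ⟨a, ha, b, hb, hab⟩ := Finset.one_lt_card.mp (by omega : 1 < S.card)
    refine ⟨dist a b, ?_⟩
    intro x hx y hy hxy
    by_cases hxa : x = a
    · subst hxa; exact E x hx y hy b hb hxy hab
    · calc dist x y = dist x a := E x hx y hy a ha hxy hxa
        _ = dist a x := dist_comm _ _
        _ = dist a b := E a ha x hx b hb (Ne.symm hxa) hab
  · rintro ⟨r, hr⟩
    intro a ha b hb c hc hab hbc hac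
    have h1 : dist a b = r := hr a ha b hb hab
    have h2 : dist c b = r := hr c hc b hb hbc.symm
    have h3 : dist a c = r := hr a ha c hc hac
    have hrpos : 0 < r := h1 ▸ dist_pos.mpr hab
    have hlaw := EuclideanGeometry.law_cos a b c
    rw [h1, h2, h3] at hlaw
    have hcos : Real.cos (EuclideanGeometry.angle a b c) = 1 / 2 := by
      nlinarith [hlaw, mul_pos hrpos hrpos]
    have := Real.pi_pos
    have h13 : Real.cos (Real.pi / 3) = 1 / 2 := Real.cos_pi_div_three
    have heq : EuclideanGeometry.angle a b c = Real.pi / 3 :=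
      Real.injOn_cos
        ⟨EuclideanGeometry.angle_nonneg _ _ _, EuclideanGeometry.angle_le_pi _ _ _⟩
        ⟨by positivity, by linarith⟩ (by rw [hcos, h13])
    exact heq.le
end

section
/- Fix c ∈ (0,1) and positive integers k ≤ d. There exists a family of k-element subsets F_1, ..., F_m of {1, ..., d} with pairwise intersections |F_i ∩ F_j| < ck for i ≠ j, and m ≥ C(d,k) / (Σ_{j=⌈ck⌉}^{k} C(k,j)·C(d-k, k-j)). -/
open Finset

lemma count_cover (d k t : ℕ) (A : Finset (Fin d)) (hA : A.card = k) :
    ((Finset.univ.powersetCard k).filter (fun B => t ≤ (A ∩ B).card)).card ≤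
      ∑ j ∈ Finset.Icc t k, k.choose j * (d - k).choose (k - j) := by
  classical
  have key : ((Finset.univ.powersetCard k).filter (fun B => t ≤ (A ∩ B).card)).card ≤
      ((Finset.Icc t k).sigma (fun j => A.powersetCard j ×ˢ Aᶜ.powersetCard (k - j))).card := by
    apply Finset.card_le_card_of_injOn (fun B => ⟨(A ∩ B).card, (A ∩ B, B \ A)⟩)
    · intro B hB
      simp only [Finset.mem_coe, mem_filter, Finset.mem_powersetCard] at hB
      obtain ⟨⟨-, hBk⟩, ht⟩ := hB
      have h1 : (A ∩ B).card ≤ k := hA ▸ card_le_card inter_subset_left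
      have h2 : (B \ A).card = k - (A ∩ B).card := by
        have hBA : B \ A = B \ (A ∩ B) := by ext x; simp [and_comm]
        rw [hBA, card_sdiff_of_subset inter_subset_right, hBk]
      simp only [Finset.mem_coe, Finset.mem_sigma, Finset.mem_Icc, Finset.mem_product, Finset.mem_powersetCard]
      refine ⟨⟨ht, h1⟩, ⟨inter_subset_left, trivial⟩, ⟨?_, h2⟩⟩
      intro x hx
      simp only [Finset.mem_sdiff] at hx
      simp [hx.2]
    · intro B hB B' hB' h
      simp only [Sigma.mk.inj_iff, Prod.mk.injEq, heq_eq_eq] at h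
      have hrec : ∀ C : Finset (Fin d), C = (A ∩ C) ∪ (C \ A) := by
        intro C; ext x; by_cases hx : x ∈ A <;> simp [hx]
      rw [hrec B, hrec B', h.2.1, h.2.2]
  calc ((Finset.univ.powersetCard k).filter (fun B => t ≤ (A ∩ B).card)).card
      ≤ _ := key
    _ = ∑ j ∈ Finset.Icc t k, (A.powersetCard j ×ˢ Aᶜ.powersetCard (k - j)).card :=
        Finset.card_sigma _ _
    _ = ∑ j ∈ Finset.Icc t k, k.choose j * (d - k).choose (k - j) := by
        refine Finset.sum_congr rfl fun j hj => ?_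
        rw [Finset.card_product, Finset.card_powersetCard, Finset.card_powersetCard, hA,
          Finset.card_compl, hA, Fintype.card_fin]

theorem stmt4 (d k : ℕ) (hk : 1 ≤ k) (hkd : k ≤ d) (c : ℝ) (hc : 0 < c) (hc1 : c < 1) :
    ∃ (m : ℕ) (F : Fin m → Finset (Fin d)),
      (∀ i, (F i).card = k) ∧
      (∀ i j, i ≠ j → ((F i ∩ F j).card : ℝ) < c * k) ∧
      (m : ℝ) ≥ (d.choose k : ℝ) /
        (∑ j ∈ Finset.Icc ⌈c * k⌉₊ k, (k.choose j : ℝ) * ((d - k).choose (k - j)) : ℝ) := by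
  classical
  set t := ⌈c * k⌉₊ with htdef
  have hck : c * k ≤ (k : ℝ) := by nlinarith [Nat.cast_nonneg (α := ℝ) k]
  have htk : t ≤ k := Nat.ceil_le.mpr hck
  set P : Finset (Finset (Fin d)) → Prop := fun G =>
    (∀ A ∈ G, A.card = k) ∧ ∀ A ∈ G, ∀ B ∈ G, A ≠ B → (A ∩ B).card < t with hPdef
  have hP0 : P ∅ := ⟨by simp, by simp⟩
  obtain ⟨G, hG, hmax⟩ := Finset.exists_max_image (Finset.univ.filter P) Finset.card
    ⟨∅, mem_filter.mpr ⟨mem_univ _, hP0⟩⟩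
  have hGv : P G := (mem_filter.mp hG).2
  have hkt : t ≤ (k : ℕ) := htk
  have cover : ∀ B ∈ Finset.univ.powersetCard k, ∃ A ∈ G, t ≤ (A ∩ B).card := by
    intro B hB
    have hBk : B.card = k := (Finset.mem_powersetCard.mp hB).2
    by_cases hBG : B ∈ G
    · exact ⟨B, hBG, by simp [hBk, htk]⟩
    · by_contra hcon
      push_neg at hcon
      have hPins : P (insert B G) := by
        constructor
        · intro A hA
          rcases mem_insert.mp hA with rfl | h
          · exact hBk
          · exact hGv.1 A h
        · intro A hA A' hA' hne
          rcases mem_insert.mp hA with rfl | h <;> rcases mem_insert.mp hA' with rfl | h'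
          · exact absurd rfl hne
          · rw [inter_comm]; exact hcon A' h'
          · exact hcon A h
          · exact hGv.2 A h A' h' hne
      have := hmax (insert B G) (mem_filter.mpr ⟨mem_univ _, hPins⟩)
      rw [card_insert_of_notMem hBG] at this
      omega
  have hcount : d.choose k ≤ G.card * ∑ j ∈ Finset.Icc t k, k.choose j * (d - k).choose (k - j) := by
    have h1 : Finset.univ.powersetCard k ⊆
        G.biUnion (fun A => (Finset.univ.powersetCard k).filter (fun B => t ≤ (A ∩ B).card)) := by
      intro B hB
      obtain ⟨A, hA, ht⟩ := cover B hB
      exact mem_biUnion.mpr ⟨A, hA, mem_filter.mpr ⟨hB, ht⟩⟩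
    calc d.choose k = (Finset.univ.powersetCard k (α := Fin d)).card := by
          rw [Finset.card_powersetCard, Finset.card_univ, Fintype.card_fin]
      _ ≤ _ := card_le_card h1
      _ ≤ ∑ A ∈ G, ((Finset.univ.powersetCard k).filter (fun B => t ≤ (A ∩ B).card)).card :=
          card_biUnion_le
      _ ≤ ∑ A ∈ G, ∑ j ∈ Finset.Icc t k, k.choose j * (d - k).choose (k - j) :=
          Finset.sum_le_sum fun A hA => count_cover d k t A (hGv.1 A hA)
      _ = G.card * ∑ j ∈ Finset.Icc t k, k.choose j * (d - k).choose (k - j) := by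
          rw [Finset.sum_const, smul_eq_mul]
  have hD1 : 1 ≤ ∑ j ∈ Finset.Icc t k, k.choose j * (d - k).choose (k - j) := by
    have hkmem : k ∈ Finset.Icc t k := Finset.mem_Icc.mpr ⟨htk, le_rfl⟩
    calc (1 : ℕ) = k.choose k * (d - k).choose (k - k) := by simp
      _ ≤ _ := Finset.single_le_sum (f := fun j => k.choose j * (d - k).choose (k - j)) (fun j _ => Nat.zero_le _) hkmem
  refine ⟨G.card, fun i => (G.equivFin.symm i : Finset (Fin d)), ?_, ?_, ?_⟩
  · intro i
    exact hGv.1 _ (G.equivFin.symm i).2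
  · intro i j hij
    have hne : ((G.equivFin.symm i : Finset (Fin d))) ≠ (G.equivFin.symm j : Finset (Fin d)) := by
      intro h
      exact hij (G.equivFin.symm.injective (Subtype.ext h))
    have := hGv.2 _ (G.equivFin.symm i).2 _ (G.equivFin.symm j).2 hne
    exact Nat.lt_ceil.mp this
  · rw [ge_iff_le]
    have hDpos : (0 : ℝ) < ∑ j ∈ Finset.Icc t k, (k.choose j : ℝ) * ((d - k).choose (k - j)) := by
      have : ((∑ j ∈ Finset.Icc t k, k.choose j * (d - k).choose (k - j) : ℕ) : ℝ) =
          ∑ j ∈ Finset.Icc t k, (k.choose j : ℝ) * ((d - k).choose (k - j)) := by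
        push_cast; ring_nf
      rw [← this]
      exact_mod_cast Nat.lt_of_lt_of_le Nat.zero_lt_one hD1
    rw [div_le_iff₀ hDpos]
    have : ((d.choose k : ℕ) : ℝ) ≤
        ((G.card * ∑ j ∈ Finset.Icc t k, k.choose j * (d - k).choose (k - j) : ℕ) : ℝ) := by
      exact_mod_cast hcount
    push_cast at this
    convert this using 2
end

section
/- Let S be a finite set of points in ℝ^d (|S| ≥ 3) such that every angle formed by three distinct points of S is less than π/3 + c, with 0 < c < 0.02, and suppose the maximum pairwise distance in S equals 1. Then every pairwise distance in S exceeds (1 - 1.744c)² > 1 - 3.488c. -/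
open InnerProductGeometry in
private lemma law_sin_aux {V : Type*} [NormedAddCommGroup V] [InnerProductSpace ℝ V]
    (u w : V) (hu : u ≠ 0) :
    Real.sin (InnerProductGeometry.angle u w) * ‖w‖
      = Real.sin (InnerProductGeometry.angle (-u) (w - u)) * ‖w - u‖ := by
  have key : (inner ℝ (-u) (-u) : ℝ) * inner ℝ (w - u) (w - u)
      - inner ℝ (-u) (w - u) * inner ℝ (-u) (w - u)
      = (inner ℝ u u : ℝ) * inner ℝ w w - inner ℝ u w * inner ℝ u w := by
    simp only [inner_neg_neg, inner_neg_left, inner_neg_right, inner_sub_left, inner_sub_right,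
      real_inner_comm w u]
    ring
  have h1 := sin_angle_mul_norm_mul_norm u w
  have h2 := sin_angle_mul_norm_mul_norm (-u) (w - u)
  rw [key, norm_neg] at h2
  have h3 : ‖u‖ * (Real.sin (InnerProductGeometry.angle u w) * ‖w‖)
      = ‖u‖ * (Real.sin (InnerProductGeometry.angle (-u) (w - u)) * ‖w - u‖) := by
    rw [show ‖u‖ * (Real.sin (InnerProductGeometry.angle u w) * ‖w‖)
        = Real.sin (InnerProductGeometry.angle u w) * (‖u‖ * ‖w‖) by ring, h1, ← h2]
    ring
  exact mul_left_cancel₀ (norm_ne_zero_iff.2 hu) h3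

private lemma law_sin_pts {V : Type*} [NormedAddCommGroup V] [InnerProductSpace ℝ V]
    (a b e : V) (hab : a ≠ b) :
    Real.sin (EuclideanGeometry.angle b a e) * dist a e
      = Real.sin (EuclideanGeometry.angle a b e) * dist b e := by
  have h := law_sin_aux (b - a) (e - a) (sub_ne_zero.2 hab.symm)
  have e1 : EuclideanGeometry.angle b a e = InnerProductGeometry.angle (b - a) (e - a) := by
    simp only [EuclideanGeometry.angle, vsub_eq_sub]
  have e2 : EuclideanGeometry.angle a b e
      = InnerProductGeometry.angle (-(b - a)) ((e - a) - (b - a)) := by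
    simp only [EuclideanGeometry.angle, vsub_eq_sub]
    congr 1 <;> abel
  have d1 : dist a e = ‖e - a‖ := by rw [dist_eq_norm, norm_sub_rev]
  have d2 : dist b e = ‖(e - a) - (b - a)‖ := by
    rw [dist_eq_norm, norm_sub_rev, show e - a - (b - a) = e - b by abel]
  rw [e1, e2, d1, d2]
  exact h

private lemma trig_key {c : ℝ} (hc : 0 < c) (hc' : c < 0.02) :
    (1 - 1.744 * c) * Real.sin (Real.pi / 3 + c) ≤ Real.sin (Real.pi / 3 - 2 * c) := by
  have hs3 : Real.sqrt 3 ^ 2 = 3 := Real.sq_sqrt (by norm_num)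
  have hs3n : (0 : ℝ) ≤ Real.sqrt 3 := Real.sqrt_nonneg 3
  have hsl : (1.73205 : ℝ) ≤ Real.sqrt 3 := by nlinarith
  have hsu : Real.sqrt 3 ≤ (1.7320509 : ℝ) := by nlinarith
  have e1 : Real.sin (Real.pi / 3 - 2 * c)
      = Real.sqrt 3 / 2 * Real.cos (2 * c) - 1 / 2 * Real.sin (2 * c) := by
    rw [Real.sin_sub, Real.sin_pi_div_three, Real.cos_pi_div_three]
  have e2 : Real.sin (Real.pi / 3 + c)
      = Real.sqrt 3 / 2 * Real.cos c + 1 / 2 * Real.sin c := by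
    rw [Real.sin_add, Real.sin_pi_div_three, Real.cos_pi_div_three]
  have hcos2 : 1 - (2 * c) ^ 2 / 2 ≤ Real.cos (2 * c) := Real.one_sub_sq_div_two_le_cos
  have hsin2 : Real.sin (2 * c) ≤ 2 * c := Real.sin_le (by linarith)
  have hsinc : Real.sin c ≤ c := Real.sin_le hc.le
  have hcosc : Real.cos c ≤ 1 - c ^ 2 / 2 + c ^ 4 * (5 / 96) := by
    have hb := Real.cos_bound (x := c) (by rw [abs_of_pos hc]; linarith)
    rw [abs_of_pos hc] at hb
    have := (abs_le.1 hb).2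
    linarith
  rw [e1, e2]
  have ht : (0 : ℝ) < 1 - 1.744 * c := by nlinarith
  have step : (1 - 1.744 * c) * (Real.sqrt 3 / 2 * Real.cos c + 1 / 2 * Real.sin c)
      ≤ (1 - 1.744 * c) * (Real.sqrt 3 / 2 * (1 - c ^ 2 / 2 + c ^ 4 * (5 / 96)) + 1 / 2 * c) := by
    apply mul_le_mul_of_nonneg_left _ ht.le
    have : Real.sqrt 3 / 2 * Real.cos c ≤ Real.sqrt 3 / 2 * (1 - c ^ 2 / 2 + c ^ 4 * (5 / 96)) :=
      mul_le_mul_of_nonneg_left hcosc (by positivity)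
    linarith
  refine step.trans ?_
  have step2 : Real.sqrt 3 / 2 * (1 - (2 * c) ^ 2 / 2) - 1 / 2 * (2 * c)
      ≤ Real.sqrt 3 / 2 * Real.cos (2 * c) - 1 / 2 * Real.sin (2 * c) := by
    have : Real.sqrt 3 / 2 * (1 - (2 * c) ^ 2 / 2) ≤ Real.sqrt 3 / 2 * Real.cos (2 * c) :=
      mul_le_mul_of_nonneg_left hcos2 (by positivity)
    linarith
  refine le_trans ?_ step2
  nlinarith [mul_nonneg (mul_nonneg hc.le hc.le) (sub_nonneg.2 hc'.le),
    mul_nonneg hc.le (sub_nonneg.2 hc'.le),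
    mul_nonneg (mul_nonneg (mul_nonneg hc.le hc.le) hc.le) (sub_nonneg.2 hc'.le),
    mul_nonneg (mul_nonneg hc.le hc.le) (mul_nonneg hc.le hc.le),
    mul_nonneg hc.le (sub_nonneg.2 hsl)]

set_option maxHeartbeats 1000000 in
theorem stmt13 (d : ℕ) (S : Finset (EuclideanSpace ℝ (Fin d))) (hS : 3 ≤ S.card)
    (c : ℝ) (hc : 0 < c) (hc' : c < 0.02)
    (hang : ∀ a ∈ S, ∀ b ∈ S, ∀ e ∈ S, a ≠ b → b ≠ e → a ≠ e →
      EuclideanGeometry.angle a b e < Real.pi / 3 + c)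
    (hdiam : ∀ x ∈ S, ∀ y ∈ S, dist x y ≤ 1)
    (hmax : ∃ x ∈ S, ∃ y ∈ S, dist x y = 1) :
    (∀ x ∈ S, ∀ y ∈ S, x ≠ y → dist x y > (1 - 1.744 * c) ^ 2) ∧
      (1 - 1.744 * c) ^ 2 > 1 - 3.488 * c := by
  have hπ := Real.pi_gt_d6
  have hπ' := Real.pi_lt_d2
  have ht0 : (0 : ℝ) < 1 - 1.744 * c := by nlinarith
  have ht1 : 1 - 1.744 * c < 1 := by nlinarith
  -- lower bound on angles
  have angle_lb : ∀ a ∈ S, ∀ b ∈ S, ∀ e ∈ S, a ≠ b → b ≠ e → a ≠ e →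
      Real.pi / 3 - 2 * c < EuclideanGeometry.angle a b e := by
    intro a ha b hb e he hab hbe hae
    have hsum := EuclideanGeometry.angle_add_angle_add_angle_eq_pi (p₁ := a) (p₂ := b) (p₃ := e)
      hab.symm
    have h1 := hang b hb e he a ha hbe hae.symm hab.symm
    have h2 := hang e he a ha b hb hae.symm hab hbe.symm
    linarith
  -- ratio bound from the law of sines
  have ratio : ∀ a ∈ S, ∀ b ∈ S, ∀ e ∈ S, a ≠ b → b ≠ e → a ≠ e →
      (1 - 1.744 * c) * dist a e < dist b e := by
    intro a ha b hb e he hab hbe hae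
    have hlaw := law_sin_pts a b e hab
    set A := EuclideanGeometry.angle b a e with hA
    set B := EuclideanGeometry.angle a b e with hB
    have hA1 : Real.pi / 3 - 2 * c < A := angle_lb b hb a ha e he hab.symm hae hbe
    have hA2 : A < Real.pi / 3 + c := hang b hb a ha e he hab.symm hae hbe
    have hB1 : Real.pi / 3 - 2 * c < B := angle_lb a ha b hb e he hab hbe hae
    have hB2 : B < Real.pi / 3 + c := hang a ha b hb e he hab hbe hae
    have hhalf : Real.pi / 3 + c < Real.pi / 2 := by nlinarith
    have hposarg : 0 < Real.pi / 3 - 2 * c := by nlinarith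
    have hAnn : 0 ≤ A := EuclideanGeometry.angle_nonneg _ _ _
    have hBnn : 0 ≤ B := EuclideanGeometry.angle_nonneg _ _ _
    have hsinA : Real.sin (Real.pi / 3 - 2 * c) < Real.sin A :=
      Real.sin_lt_sin_of_lt_of_le_pi_div_two (by nlinarith) (by linarith) hA1
    have hsinB : Real.sin B < Real.sin (Real.pi / 3 + c) :=
      Real.sin_lt_sin_of_lt_of_le_pi_div_two (by linarith) (by linarith) hB2
    have hsinlb : 0 < Real.sin (Real.pi / 3 - 2 * c) :=
      Real.sin_pos_of_pos_of_lt_pi hposarg (by nlinarith)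
    have hsinB' : Real.sin (Real.pi / 3 - 2 * c) < Real.sin B :=
      Real.sin_lt_sin_of_lt_of_le_pi_div_two (by nlinarith) (by linarith) hB1
    have hsinBpos : 0 < Real.sin B := lt_trans hsinlb hsinB'
    have hdae : 0 < dist a e := dist_pos.2 hae
    have htrig := trig_key hc hc'
    -- sin B * dist b e = sin A * dist a e > (1-1.744c) * sin B * dist a e
    have hmain : Real.sin B * ((1 - 1.744 * c) * dist a e) < Real.sin B * dist b e := by
      have h6 : Real.sin (Real.pi / 3 - 2 * c) * dist a e < Real.sin A * dist a e :=
        mul_lt_mul_of_pos_right hsinA hdae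
      have h7 : (1 - 1.744 * c) * Real.sin (Real.pi / 3 + c) * dist a e
          ≤ Real.sin (Real.pi / 3 - 2 * c) * dist a e :=
        mul_le_mul_of_nonneg_right htrig dist_nonneg
      have h8 : (1 - 1.744 * c) * Real.sin B * dist a e
          < (1 - 1.744 * c) * Real.sin (Real.pi / 3 + c) * dist a e := by
        have := mul_lt_mul_of_pos_right hsinB (mul_pos ht0 hdae)
        nlinarith [this]
      nlinarith [hlaw, h6, h7, h8]
    exact lt_of_mul_lt_mul_left hmain hsinBpos.le
  obtain ⟨u, hu, v, hv, huv⟩ := hmax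
  have huv' : u ≠ v := by
    intro h; rw [h, dist_self] at huv; norm_num at huv
  have base : ∀ z ∈ S, z ≠ u → 1 - 1.744 * c < dist z u := by
    intro z hz hzu
    rcases eq_or_ne z v with rfl | hzv
    · rw [dist_comm, huv]; linarith
    · have := ratio v hv z hz u hu (fun h => hzv h.symm) hzu huv'.symm
      rw [dist_comm v u, huv] at this
      linarith [this]
  have tsq_lt : (1 - 1.744 * c) ^ 2 < 1 - 1.744 * c := by nlinarith
  constructor
  · intro x hx y hy hxy
    by_cases hyu : y = u
    · subst hyu
      have := base x hx hxy
      nlinarith [this]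
    · by_cases hxu : x = u
      · subst hxu
        have := base y hy hyu
        rw [dist_comm]
        nlinarith [this]
      · have h1 : 1 - 1.744 * c < dist u x := by
          rw [dist_comm]; exact base x hx hxu
        have h2 := ratio u hu y hy x hx (fun h => hyu h.symm) (fun h => hxy h.symm)
          (fun h => hxu h.symm)
        rw [dist_comm x y]
        calc (1 - 1.744 * c) ^ 2 = (1 - 1.744 * c) * (1 - 1.744 * c) := by ring
          _ < (1 - 1.744 * c) * dist u x := mul_lt_mul_of_pos_left h1 ht0
          _ < dist y x := h2
  · nlinarith
end

section
/- Define H(a,b) = -ab·log a - 2(1-a)·log(1-a) + ab·log b + 2a(1-b)·log(1-b) + (1-2a+ab)·log(1-2a+ab) for 0 < a < 1/2 and b ∈ (0,1). Fix a ∈ (0,1). Then the partial derivative ∂H/∂b = -a·log a + a·log b - 2a·log(1-b) + a·log(1-2a+ab) is increasing in b and vanishes at b = a; consequently, for c ≥ a, H(a,b) ≥ H(a,c) for all b ∈ [c, 1). -/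
noncomputable def H (a b : ℝ) : ℝ :=
  -(a * b) * Real.log a - 2 * (1 - a) * Real.log (1 - a) + a * b * Real.log b +
    2 * a * (1 - b) * Real.log (1 - b) + (1 - 2 * a + a * b) * Real.log (1 - 2 * a + a * b)

noncomputable def Hb (a b : ℝ) : ℝ :=
  -a * Real.log a + a * Real.log b - 2 * a * Real.log (1 - b) +
    a * Real.log (1 - 2 * a + a * b)

theorem stmt19 (a : ℝ) (ha : 0 < a) (ha' : a < 1 / 2) :
    (∀ b ∈ Set.Ioo (0 : ℝ) 1, HasDerivAt (fun t => H a t) (Hb a b) b) ∧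
      StrictMonoOn (Hb a) (Set.Ioo (0 : ℝ) 1) ∧
      Hb a a = 0 ∧
      ∀ c : ℝ, a ≤ c → c < 1 → ∀ b ∈ Set.Ico c 1, H a b ≥ H a c := by
  have ha1 : a < 1 := by linarith
  have hpart1 : ∀ b ∈ Set.Ioo (0 : ℝ) 1, HasDerivAt (fun t => H a t) (Hb a b) b := by
    intro b hb
    obtain ⟨hb0, hb1⟩ := hb
    have hu : (0:ℝ) < 1 - 2*a + a*b := by nlinarith
    have d1 : HasDerivAt (fun t : ℝ => t * Real.log t) (Real.log b + 1) b :=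
      Real.hasDerivAt_mul_log hb0.ne'
    have dg2 : HasDerivAt (fun t : ℝ => 1 - t) (-1 : ℝ) b := by
      simpa using (hasDerivAt_id b).const_sub 1
    have d2 : HasDerivAt (fun t : ℝ => (1 - t) * Real.log (1 - t))
        ((Real.log (1 - b) + 1) * (-1)) b := by
      have h := Real.hasDerivAt_mul_log (x := 1 - b) (sub_pos.mpr hb1).ne'
      simpa [Function.comp_def] using h.comp b dg2
    have dg3 : HasDerivAt (fun t : ℝ => 1 - 2*a + a*t) a b := by
      simpa using ((hasDerivAt_id b).const_mul a).const_add (1 - 2*a)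
    have d3 : HasDerivAt (fun t : ℝ => (1 - 2*a + a*t) * Real.log (1 - 2*a + a*t))
        ((Real.log (1 - 2*a + a*b) + 1) * a) b := by
      simpa [Function.comp_def] using (Real.hasDerivAt_mul_log hu.ne').comp b dg3
    have d0 : HasDerivAt (fun t : ℝ => (-(a * Real.log a)) * t) (-(a*Real.log a)) b := by
      simpa using (hasDerivAt_id b).const_mul (-(a * Real.log a))
    have hF := (((d0.add_const (-(2 * (1 - a) * Real.log (1 - a)))).add
        (d1.const_mul a)).add (d2.const_mul (2 * a))).add d3
    have hfun : (fun t => H a t) = (fun t : ℝ =>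
        ((((-(a * Real.log a)) * t + -(2 * (1 - a) * Real.log (1 - a))) + a * (t * Real.log t)) +
          2 * a * ((1 - t) * Real.log (1 - t))) + (1 - 2*a + a*t) * Real.log (1 - 2*a + a*t)) := by
      funext t; simp only [H]; ring
    have hval : Hb a b = -(a * Real.log a) + a * (Real.log b + 1) +
        2 * a * ((Real.log (1 - b) + 1) * (-1)) + (Real.log (1 - 2*a + a*b) + 1) * a := by
      simp only [Hb]; ring
    rw [hfun, hval]
    exact hF
  have hpart2 : StrictMonoOn (Hb a) (Set.Ioo (0 : ℝ) 1) := by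
    intro x hx y hy hxy
    have hux : (0:ℝ) < 1 - 2*a + a*x := by nlinarith [hx.1]
    have l1 : Real.log x < Real.log y := Real.log_lt_log hx.1 hxy
    have l2 : Real.log (1-y) < Real.log (1-x) := Real.log_lt_log (by linarith [hy.2]) (by linarith)
    have l3 : Real.log (1 - 2*a + a*x) < Real.log (1 - 2*a + a*y) :=
      Real.log_lt_log hux (by nlinarith)
    simp only [Hb]
    nlinarith [mul_lt_mul_of_pos_left l1 ha, mul_lt_mul_of_pos_left l2 ha,
      mul_lt_mul_of_pos_left l3 ha]
  have hpart3 : Hb a a = 0 := by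
    have h1a : (0:ℝ) < 1 - a := by linarith
    have hsq : 1 - 2*a + a*a = (1-a)^2 := by ring
    have : Real.log (1 - 2*a + a*a) = 2 * Real.log (1-a) := by
      rw [hsq, Real.log_pow]; push_cast; ring
    simp only [Hb, this]; ring
  refine ⟨hpart1, hpart2, hpart3, ?_⟩
  intro c hac hc1 b hb
  obtain ⟨hcb, hb1⟩ := hb
  rcases eq_or_lt_of_le hcb with rfl | hlt
  · exact le_refl _
  · have hsub : Set.Icc c b ⊆ Set.Ioo (0 : ℝ) 1 := fun x hx =>
      ⟨by linarith [hx.1], by linarith [hx.2]⟩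
    have hmono : MonotoneOn (fun t => H a t) (Set.Icc c b) := by
      apply monotoneOn_of_hasDerivWithinAt_nonneg (convex_Icc c b) (f' := Hb a)
      · intro x hx
        exact (hpart1 x (hsub hx)).continuousAt.continuousWithinAt
      · intro x hx
        exact (hpart1 x (hsub (interior_subset hx))).hasDerivWithinAt
      · intro x hx
        rw [interior_Icc] at hx
        have hxI : x ∈ Set.Ioo (0:ℝ) 1 := hsub ⟨le_of_lt hx.1, le_of_lt hx.2⟩
        have haI : a ∈ Set.Ioo (0:ℝ) 1 := ⟨ha, ha1⟩
        have : Hb a a < Hb a x := hpart2 haI hxI (by linarith [hx.1])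
        linarith [hpart3]
    exact hmono ⟨le_refl c, le_of_lt hlt⟩ ⟨le_of_lt hlt, le_refl b⟩ (le_of_lt hlt)
end
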